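/- Let p be a prime number, let N ≥ 4 be an integer, and let nonnegative real exponents a_{1j}, a_{(N-1)j} for 2 ≤ j ≤ N-2 and a_{ij} for 2 ≤ i < j ≤ N-2 be given. Then the integral over ℚ_p^{N-3} (with respect to the product Haar measure) of the nonnegative function (x₂,…,x_{N-2}) ↦ ∏_{j=2}^{N-2} |x_j|_p^{a_{1j}} |1-x_j|_p^{a_{(N-1)j}} · ∏_{2≤i<j≤N-2} |x_i - x_j|_p^{a_{ij}} diverges to +∞; that is, this function is not integrable on ℚ_p^{N-3}. -/

import Mathlib

open MeasureTheory Finset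

/-- Ultrametric fact: if `x` is within distance 1 of `c` and `‖c‖ > 1`, then `‖x‖ = ‖c‖`. -/
lemma padic_norm_eq_of_close {p : ℕ} [Fact p.Prime] {x c : ℚ_[p]}
    (h : ‖x - c‖ ≤ 1) (hc : 1 < ‖c‖) : ‖x‖ = ‖c‖ := by
  have hne : ‖x - c‖ ≠ ‖c‖ := ne_of_lt (lt_of_le_of_lt h hc)
  have := Padic.add_eq_max_of_ne (p := p) hne
  rw [sub_add_cancel] at this
  rw [this, max_eq_right (le_of_lt (lt_of_le_of_lt h hc))]

/-- If all the exponents `Re(s_{ij}) = a_{ij}` are nonnegative, then the `p`-adic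
open string `N`-point zeta integral diverges to `+∞`; in particular the integrand
is not integrable on `ℚ_p^{N-3}`. -/
theorem padic_N_point_divergence (p : ℕ) [Fact p.Prime]
    [MeasurableSpace ℚ_[p]] [BorelSpace ℚ_[p]]
    (μ : Measure ℚ_[p]) [μ.IsAddHaarMeasure]
    (hμ : μ {x : ℚ_[p] | ‖x‖ ≤ 1} = 1)
    (N : ℕ) (hN : 4 ≤ N)
    (a₁ aN₁ : Fin (N - 3) → ℝ) (a : Fin (N - 3) → Fin (N - 3) → ℝ)
    (ha₁ : ∀ j, 0 ≤ a₁ j) (haN₁ : ∀ j, 0 ≤ aN₁ j)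
    (ha : ∀ i j : Fin (N - 3), i < j → 0 ≤ a i j) :
    (∫⁻ x : Fin (N - 3) → ℚ_[p],
        ENNReal.ofReal
          ((∏ j, ‖x j‖ ^ a₁ j * ‖1 - x j‖ ^ aN₁ j) *
            ∏ j, ∏ i ∈ Finset.univ.filter (fun i => i < j), ‖x i - x j‖ ^ a i j)
        ∂(Measure.pi fun _ => μ)) = ⊤ ∧
    ¬ Integrable (fun x : Fin (N - 3) → ℚ_[p] =>
        (∏ j, ‖x j‖ ^ a₁ j * ‖1 - x j‖ ^ aN₁ j) *
          ∏ j, ∏ i ∈ Finset.univ.filter (fun i => i < j), ‖x i - x j‖ ^ a i j)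
      (Measure.pi fun _ => μ) := by
  have hp1 : (1 : ℝ) < (p : ℝ) := by
    exact_mod_cast (Fact.out : p.Prime).one_lt
  have hn : 0 < N - 3 := by omega
  set F : (Fin (N - 3) → ℚ_[p]) → ℝ := fun x =>
    (∏ j, ‖x j‖ ^ a₁ j * ‖1 - x j‖ ^ aN₁ j) *
      ∏ j, ∏ i ∈ Finset.univ.filter (fun i => i < j), ‖x i - x j‖ ^ a i j with hF
  -- scales
  set m : ℕ → Fin (N - 3) → ℕ := fun k j => k * N + (j : ℕ) + 1 with hm
  set c : ℕ → Fin (N - 3) → ℚ_[p] := fun k j => (p : ℚ_[p]) ^ (-(m k j : ℤ)) with hc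
  have hcnorm : ∀ k j, ‖c k j‖ = (p : ℝ) ^ (m k j) := by
    intro k j
    rw [hc]
    simp only [Padic.norm_p_zpow, neg_neg, zpow_natCast]
  have hcgt : ∀ k j, 1 < ‖c k j‖ := by
    intro k j
    rw [hcnorm]
    refine one_lt_pow₀ hp1 ?_
    simp only [hm]
    omega
  have hminj : ∀ k k' (j j' : Fin (N - 3)), m k j = m k' j' → k = k' ∧ j = j' := by
    intro k k' j j' h
    have hj : (j : ℕ) < N := lt_of_lt_of_le j.isLt (by omega)
    have hj' : (j' : ℕ) < N := lt_of_lt_of_le j'.isLt (by omega)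
    simp only [hm] at h
    have hk : k = k' := by
      by_contra hkk
      rcases Nat.lt_or_ge k k' with hlt | hge
      · have h2 : (k + 1) * N ≤ k' * N := Nat.mul_le_mul_right N hlt
        rw [add_one_mul] at h2
        omega
      · have hlt : k' < k := lt_of_le_of_ne hge (Ne.symm hkk)
        have h2 : (k' + 1) * N ≤ k * N := Nat.mul_le_mul_right N hlt
        rw [add_one_mul] at h2
        omega
    refine ⟨hk, Fin.ext ?_⟩
    subst hk
    omega
  have hcne : ∀ k k' (j j' : Fin (N - 3)), (k, j) ≠ (k', j') → ‖c k j‖ ≠ ‖c k' j'‖ := by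
    intro k k' j j' h hcon
    rw [hcnorm, hcnorm] at hcon
    have := (pow_right_strictMono₀ hp1).injective hcon
    obtain ⟨h1, h2⟩ := hminj k k' j j' this
    exact h (by rw [Prod.ext_iff]; exact ⟨h1, h2⟩)
  set S : ℕ → Set (Fin (N - 3) → ℚ_[p]) := fun k =>
    Set.univ.pi fun j => Metric.closedBall (c k j) 1 with hS
  have hSmem : ∀ k x, x ∈ S k ↔ ∀ j, ‖x j - c k j‖ ≤ 1 := by
    intro k x
    simp [hS, Set.mem_pi, Metric.mem_closedBall, dist_eq_norm]
  have hSmeas : ∀ k, MeasurableSet (S k) :=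
    fun k => MeasurableSet.univ_pi fun j => measurableSet_closedBall
  have hSμ : ∀ k, (Measure.pi fun _ => μ) (S k) = 1 := by
    intro k
    rw [hS]
    rw [Measure.pi_pi]
    have : ∀ j : Fin (N - 3), μ (Metric.closedBall (c k j) 1) = 1 := by
      intro j
      have hset : Metric.closedBall (c k j) 1
          = (fun x => x + (- c k j)) ⁻¹' {x : ℚ_[p] | ‖x‖ ≤ 1} := by
        ext x
        simp [Metric.mem_closedBall, dist_eq_norm, sub_eq_add_neg]
      rw [hset, measure_preimage_add_right, hμ]
    simp [this]
  -- norms on S k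
  have hxnorm : ∀ k x, x ∈ S k → ∀ j, ‖x j‖ = ‖c k j‖ := by
    intro k x hx j
    exact padic_norm_eq_of_close ((hSmem k x).1 hx j) (hcgt k j)
  have hbound : ∀ k, ∀ x ∈ S k, 1 ≤ F x := by
    intro k x hx
    have hx1 : ∀ j, (1 : ℝ) ≤ ‖x j‖ := fun j => le_of_lt ((hxnorm k x hx j) ▸ hcgt k j)
    have hx2 : ∀ j, (1 : ℝ) ≤ ‖1 - x j‖ := by
      intro j
      have hne : ‖(1 : ℚ_[p])‖ ≠ ‖-(x j)‖ := by
        rw [norm_one, norm_neg, hxnorm k x hx j]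
        exact ne_of_lt (hcgt k j)
      have := Padic.add_eq_max_of_ne (p := p) hne
      rw [← sub_eq_add_neg] at this
      rw [this, norm_one]
      exact le_max_left _ _
    have hx3 : ∀ i j : Fin (N - 3), i ≠ j → (1 : ℝ) ≤ ‖x i - x j‖ := by
      intro i j hij
      have hne : ‖x i‖ ≠ ‖-(x j)‖ := by
        rw [norm_neg, hxnorm k x hx i, hxnorm k x hx j]
        exact hcne k k i j (by simp [hij])
      have := Padic.add_eq_max_of_ne (p := p) hne
      rw [← sub_eq_add_neg] at this
      rw [this]
      exact le_trans (hx1 i) (le_max_left _ _)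
    have hmul : ∀ {u v : ℝ}, 1 ≤ u → 1 ≤ v → 1 ≤ u * v := by
      intro u v hu hv; nlinarith
    have h1 : (1 : ℝ) ≤ ∏ j, ‖x j‖ ^ a₁ j * ‖1 - x j‖ ^ aN₁ j := by
      calc (1 : ℝ) = ∏ _j : Fin (N - 3), 1 := by simp
      _ ≤ _ := by
          refine Finset.prod_le_prod (fun j _ => zero_le_one) (fun j _ => ?_)
          exact hmul (Real.one_le_rpow (hx1 j) (ha₁ j)) (Real.one_le_rpow (hx2 j) (haN₁ j))
    have h2 : (1 : ℝ) ≤ ∏ j, ∏ i ∈ Finset.univ.filter (fun i => i < j),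
        ‖x i - x j‖ ^ a i j := by
      calc (1 : ℝ) = ∏ _j : Fin (N - 3), 1 := by simp
      _ ≤ _ := by
          refine Finset.prod_le_prod (fun j _ => zero_le_one) (fun j _ => ?_)
          calc (1 : ℝ) = ∏ _i ∈ Finset.univ.filter (fun i => i < j), 1 := by simp
          _ ≤ _ := by
              refine Finset.prod_le_prod (fun i _ => zero_le_one) (fun i hi => ?_)
              rw [Finset.mem_filter] at hi
              exact Real.one_le_rpow (hx3 i j (ne_of_lt hi.2)) (ha i j hi.2)
    exact hmul h1 h2
  -- disjointness
  have hdisj : Pairwise (Function.onFun Disjoint S) := by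
    intro k k' hkk'
    rw [Function.onFun, Set.disjoint_left]
    intro x hx hx'
    have j₀ : Fin (N - 3) := ⟨0, hn⟩
    have h1 := hxnorm k x hx j₀
    have h2 := hxnorm k' x hx' j₀
    exact hcne k k' j₀ j₀ (by simp [hkk']) (h1 ▸ h2)
  -- main divergence
  have hUmeas : MeasurableSet (⋃ k, S k) := MeasurableSet.iUnion hSmeas
  have key : (∫⁻ x, ENNReal.ofReal (F x) ∂(Measure.pi fun _ => μ)) = ⊤ := by
    refine top_unique ?_
    calc (⊤ : ENNReal) = ∑' _ : ℕ, (1 : ENNReal) :=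
          (ENNReal.tsum_const_eq_top_of_ne_zero one_ne_zero).symm
    _ = ∑' k, (Measure.pi fun _ => μ) (S k) := by simp [hSμ]
    _ = (Measure.pi fun _ => μ) (⋃ k, S k) := (measure_iUnion hdisj hSmeas).symm
    _ = ∫⁻ _ in ⋃ k, S k, 1 ∂(Measure.pi fun _ => μ) := (setLIntegral_one _).symm
    _ ≤ ∫⁻ x in ⋃ k, S k, ENNReal.ofReal (F x) ∂(Measure.pi fun _ => μ) := by
        apply setLIntegral_mono' hUmeas
        intro x hx
        obtain ⟨k, hk⟩ := Set.mem_iUnion.1 hx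
        simpa using ENNReal.one_le_ofReal.2 (hbound k x hk)
    _ ≤ _ := setLIntegral_le_lintegral _ _
  constructor
  · exact key
  · intro hInt
    have hfin : (∫⁻ x, ‖F x‖ₑ ∂(Measure.pi fun _ => μ)) < ⊤ :=
      hInt.hasFiniteIntegral
    have hle : (∫⁻ x, ENNReal.ofReal (F x) ∂(Measure.pi fun _ => μ))
        ≤ ∫⁻ x, ‖F x‖ₑ ∂(Measure.pi fun _ => μ) :=
      lintegral_mono fun x => Real.ofReal_le_enorm (F x)
    rw [key, top_le_iff] at hle
    rw [hle] at hfin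
    exact lt_irrefl _ hfin
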